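/- Fix N ≥ 2 and a function F : (0,∞) → ℝ. Let z : ℝ → ℂ^N be a differentiable curve whose components z_1(t),…,z_N(t) are pairwise distinct for every t and which solves the asymptotic vortex equations. Then t ↦ Σ_{r=1}^N |z_r(t)|² is constant in t. -/

import Mathlib

open Finset

private lemma hasDerivAt_abs_sq_aux (w : ℝ → ℂ) (d : ℂ) (t : ℝ) (h : HasDerivAt w d t) :
    HasDerivAt (fun t => ‖w t‖ ^ 2)
      (2 * ((starRingEnd ℂ) (w t) * d).re) t := by
  have hre : HasDerivAt (fun t => (w t).re) d.re t := by
    exact Complex.reCLM.hasFDerivAt.comp_hasDerivAt t h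
  have him : HasDerivAt (fun t => (w t).im) d.im t := by
    exact Complex.imCLM.hasFDerivAt.comp_hasDerivAt t h
  have h2 := (hre.mul hre).add (him.mul him)
  have he : (fun t => ‖w t‖ ^ 2)
      = fun t => (w t).re * (w t).re + (w t).im * (w t).im := by
    ext t; rw [Complex.sq_norm, Complex.normSq_apply]
  rw [he]
  refine h2.congr_deriv ?_
  simp [Complex.mul_re]
  ring

/-- For `N` vortices with pairwise distinct positions solving the asymptotic
vortex equations `ż_r = i·Σ_{s≠r} F(|z_r − z_s|)·(z_r − z_s)`, the quantity
`Σ_r |z_r|²` (the leading-order angular momentum `P₀`) is conserved. -/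
theorem sum_sq_moduli_conserved (N : ℕ) (hN : 2 ≤ N) (F : ℝ → ℝ)
    (z : ℝ → Fin N → ℂ)
    (hdist : ∀ (t : ℝ) (r s : Fin N), r ≠ s → z t r ≠ z t s)
    (heq : ∀ (t : ℝ) (r : Fin N),
      HasDerivAt (fun τ => z τ r)
        (Complex.I * ∑ s ∈ univ.erase r,
          (F (‖z t r - z t s‖) : ℂ) * (z t r - z t s)) t) :
    ∀ t t' : ℝ,
      ∑ r, ‖z t r‖ ^ 2 = ∑ r, ‖z t' r‖ ^ 2 := by
  set g : ℝ → ℝ := fun t => ∑ r, ‖z t r‖ ^ 2 with hg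
  have key : ∀ t : ℝ, HasDerivAt g 0 t := by
    intro t
    set a : Fin N → ℂ := z t with ha
    set φ : Fin N → Fin N → ℝ := fun r s =>
      ((starRingEnd ℂ) (a r)
        * ((F (‖a r - a s‖) : ℂ) * (a r - a s))).im with hφ
    have hsum : ∀ r : Fin N, HasDerivAt (fun τ => ‖z τ r‖ ^ 2)
        (2 * ((starRingEnd ℂ) (a r)
          * (Complex.I * ∑ s ∈ univ.erase r,
            (F (‖a r - a s‖) : ℂ) * (a r - a s))).re) t := by
      intro r
      exact hasDerivAt_abs_sq_aux _ _ t (heq t r)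
    have hD := HasDerivAt.sum (u := univ) (fun r _ => hsum r)
    have hzero :
        (∑ r : Fin N, 2 * ((starRingEnd ℂ) (a r)
          * (Complex.I * ∑ s ∈ univ.erase r,
            (F (‖a r - a s‖) : ℂ) * (a r - a s))).re) = 0 := by
      have hterm : ∀ r : Fin N,
          2 * ((starRingEnd ℂ) (a r)
            * (Complex.I * ∑ s ∈ univ.erase r,
              (F (‖a r - a s‖) : ℂ) * (a r - a s))).re
          = -2 * ∑ s ∈ univ.erase r, φ r s := by
        intro r
        set S := ∑ s ∈ univ.erase r,
          (F (‖a r - a s‖) : ℂ) * (a r - a s) with hS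
        have h1 : (starRingEnd ℂ) (a r) * (Complex.I * S)
            = Complex.I * ((starRingEnd ℂ) (a r) * S) := by ring
        have h2 : ((starRingEnd ℂ) (a r) * S).im = ∑ s ∈ univ.erase r, φ r s := by
          rw [hS, Finset.mul_sum, Complex.im_sum]
        rw [h1]
        simp only [Complex.mul_re, Complex.I_re, Complex.I_im, zero_mul, one_mul]
        rw [h2]
        ring
      rw [Finset.sum_congr rfl (fun r _ => hterm r), ← Finset.mul_sum]
      have hswap : ∑ r, ∑ s ∈ univ.erase r, φ r s
          = ∑ r, ∑ s ∈ univ.erase r, φ s r := by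
        rw [Finset.sum_comm' (s' := fun s => univ.erase s) (t' := univ)]
        simp [mem_erase, and_comm, ne_comm, eq_comm]
      have hpair : ∀ r s : Fin N, φ r s + φ s r = 0 := by
        intro r s
        have habs : ‖a s - a r‖ = ‖a r - a s‖ :=
          norm_sub_rev _ _
        simp only [hφ, habs]
        simp [Complex.mul_im, Complex.sub_re, Complex.sub_im]
        ring
      have h2T : (∑ r, ∑ s ∈ univ.erase r, φ r s)
          + (∑ r, ∑ s ∈ univ.erase r, φ r s) = 0 := by
        nth_rewrite 2 [hswap]
        rw [← Finset.sum_add_distrib,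
          Finset.sum_congr rfl (fun r _ => (Finset.sum_add_distrib).symm)]
        exact Finset.sum_eq_zero fun r _ => Finset.sum_eq_zero fun s _ => hpair r s
      have hT : ∑ r, ∑ s ∈ univ.erase r, φ r s = 0 := by
        linarith [h2T]
      rw [hT]; ring
    rw [hzero] at hD
    have hfun : g = ∑ i, fun τ => ‖z τ i‖ ^ 2 := by
      ext τ; simp [hg, Finset.sum_apply]
    rw [hfun]
    exact hD
  intro t t'
  exact is_const_of_deriv_eq_zero (fun x => (key x).differentiableAt)
    (fun x => (key x).deriv) t t'
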